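/- arXiv:2303.11077 — 3 statements merged into one kernel-verified Lean document; each statement's English description precedes it below -/
import Mathlib

section
/- No deterministic query algorithm making at most N−2 queries to the oracle c can output, for every instance c : {0,…,N−1} → [0,1) with average value 3/16, a probability distribution P_A with |P_A(x) − c(x)/∑_y c(y)| ≤ 1/(100N) for all x. Formally: for any function A assigning to each c a distribution depending only on the values of c at a fixed set Q of at most N−2 points, there exist two instances c, c′ agreeing on Q and both having average 3/16, and a point x, such that |c(x)/∑_y c(y) − c′(x)/∑_y c′(y)| > 2/(100N). -/
open Finset

/-- Classical lower bound for proportional sampling: for any query set `Q` of at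
most `N - 2` points, there are two instances with average `3/16`, agreeing on
`Q`, whose proportional-sampling distributions differ by more than `2/(100 N)`
at some point; hence no algorithm reading only `Q` can be `1/(100 N)`-correct on
both. -/
theorem stmt11 (N : ℕ) (hN : 4 ≤ N) (hEven : Even N)
    (Q : Finset ℕ) (hQ : Q ⊆ Finset.range N) (hQcard : Q.card ≤ N - 2) :
    ∃ c c' : ℕ → ℝ,
      (∀ x ∈ Finset.range N, c x ∈ Set.Ico (0 : ℝ) 1) ∧
      (∀ x ∈ Finset.range N, c' x ∈ Set.Ico (0 : ℝ) 1) ∧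
      (∀ x ∈ Q, c x = c' x) ∧
      (1 / (N : ℝ)) * ∑ x ∈ Finset.range N, c x = 3 / 16 ∧
      (1 / (N : ℝ)) * ∑ x ∈ Finset.range N, c' x = 3 / 16 ∧
      ∃ x ∈ Finset.range N,
        2 / (100 * (N : ℝ)) <
          |c x / ∑ y ∈ Finset.range N, c y - c' x / ∑ y ∈ Finset.range N, c' y| := by
  -- find two distinct points outside Q
  have hNpos : (0 : ℝ) < N := by positivity
  have hcard : 2 ≤ (Finset.range N \ Q).card := by
    have h := Finset.le_card_sdiff Q (Finset.range N)
    have hr : (Finset.range N).card = N := Finset.card_range N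
    omega
  obtain ⟨x₁, hx₁, x₂, hx₂, hne⟩ := Finset.one_lt_card.mp (by omega : 1 < (Finset.range N \ Q).card)
  obtain ⟨hx₁r, hx₁Q⟩ := Finset.mem_sdiff.mp hx₁
  obtain ⟨hx₂r, hx₂Q⟩ := Finset.mem_sdiff.mp hx₂
  set c : ℕ → ℝ := fun _ => 3/16 with hc
  set c' : ℕ → ℝ := fun x => if x = x₁ then 1/8 else if x = x₂ then 1/4 else 3/16 with hc'
  have hsum : ∑ x ∈ Finset.range N, c x = 3 * N / 16 := by
    simp [hc]; ring
  have hsum' : ∑ x ∈ Finset.range N, c' x = 3 * N / 16 := by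
    have h1 : ∑ x ∈ Finset.range N, c' x
        = c' x₁ + ∑ x ∈ (Finset.range N).erase x₁, c' x :=
      (Finset.add_sum_erase _ _ hx₁r).symm
    have hx₂e : x₂ ∈ (Finset.range N).erase x₁ :=
      Finset.mem_erase.mpr ⟨hne.symm, hx₂r⟩
    have h2 : ∑ x ∈ (Finset.range N).erase x₁, c' x
        = c' x₂ + ∑ x ∈ ((Finset.range N).erase x₁).erase x₂, c' x :=
      (Finset.add_sum_erase _ _ hx₂e).symm
    have h3 : ∑ x ∈ ((Finset.range N).erase x₁).erase x₂, c' x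
        = ∑ x ∈ ((Finset.range N).erase x₁).erase x₂, (3/16 : ℝ) := by
      apply Finset.sum_congr rfl
      intro x hx
      have h := Finset.mem_erase.mp hx
      have h' := Finset.mem_erase.mp h.2
      simp [hc', h.1, h'.1]
    have hcard2 : (((Finset.range N).erase x₁).erase x₂).card = N - 2 := by
      rw [Finset.card_erase_of_mem hx₂e, Finset.card_erase_of_mem hx₁r, Finset.card_range]
      omega
    have hN2 : ((N - 2 : ℕ) : ℝ) = (N : ℝ) - 2 := by
      have : (2 : ℕ) ≤ N := by omega
      push_cast [Nat.cast_sub this]; ring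
    rw [h1, h2, h3, Finset.sum_const, hcard2, nsmul_eq_mul, hN2]
    simp only [hc', if_pos rfl, if_neg hne.symm]
    simp only [hne.symm, ite_false, ite_true]
    ring
  refine ⟨c, c', ?_, ?_, ?_, ?_, ?_, x₁, hx₁r, ?_⟩
  · intro x _; constructor <;> norm_num [hc]
  · intro x _
    simp only [hc']
    split_ifs <;> constructor <;> norm_num
  · intro x hx
    have h1 : x ≠ x₁ := fun h => hx₁Q (h ▸ hx)
    have h2 : x ≠ x₂ := fun h => hx₂Q (h ▸ hx)
    simp only [hc, hc', if_neg h1, if_neg h2]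
  · rw [hsum]; field_simp
  · rw [hsum']; field_simp
  · rw [hsum, hsum']
    have : c x₁ / (3 * N / 16) - c' x₁ / (3 * N / 16) = 1 / (3 * N) := by
      simp [hc, hc']
      field_simp
      ring
    rw [this, abs_of_pos (by positivity)]
    rw [div_lt_div_iff₀ (by positivity) (by positivity)]
    nlinarith
end

section
/- Let p(w) be a Laurent polynomial with real coefficients satisfying p(w) = p(1/w) (reciprocity) and p(w) > 0 for all w on the unit circle. Then there exists a Laurent polynomial b(w) with real coefficients such that b(w)·b(1/w) = p(w) for all w ≠ 0. -/
open Finset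

/-- Evaluation of a Laurent polynomial with real coefficients at a nonzero
complex number. -/
noncomputable def lEval (p : ℤ →₀ ℝ) (z : ℂ) : ℂ :=
  ∑ k ∈ p.support, (p k : ℂ) * z ^ k

lemma lEval_eq_sum (p : ℤ →₀ ℝ) (z : ℂ) (s : Finset ℤ) (hs : p.support ⊆ s) :
    lEval p z = ∑ k ∈ s, (p k : ℂ) * z ^ k := by
  apply Finset.sum_subset hs
  intro x _ hx
  simp [Finsupp.notMem_support_iff.mp hx]

noncomputable def toL (q : Polynomial ℝ) : ℤ →₀ ℝ :=
  q.toFinsupp.coeff.mapDomain (fun n : ℕ => (n : ℤ))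

lemma lEval_toL (q : Polynomial ℝ) (z : ℂ) :
    lEval (toL q) z = (q.map (algebraMap ℝ ℂ)).eval z := by
  have hinj : Function.Injective (fun n : ℕ => (n : ℤ)) := fun a b h => Int.ofNat.inj h
  rw [toL, lEval_eq_sum _ z (q.toFinsupp.coeff.support.image (fun n : ℕ => (n : ℤ)))
      (Finsupp.mapDomain_support)]
  rw [Finset.sum_image (fun a _ b _ h => hinj h)]
  rw [Polynomial.eval_map, Polynomial.eval₂_eq_sum, Polynomial.sum_def]
  have hsupp : q.support = q.toFinsupp.coeff.support := (Polynomial.support_toFinsupp q).symm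
  rw [hsupp]
  apply Finset.sum_congr rfl
  intro m hm
  rw [Finsupp.mapDomain_apply hinj]
  simp [Polynomial.coeff]

lemma real_coeff_poly (B : Polynomial ℂ) (h : B.map (starRingEnd ℂ) = B) :
    ∃ Q : Polynomial ℝ, Q.map (algebraMap ℝ ℂ) = B := by
  refine ⟨∑ m ∈ B.support, Polynomial.C ((B.coeff m).re) * Polynomial.X ^ m, ?_⟩
  ext m
  have hfix : (starRingEnd ℂ) (B.coeff m) = B.coeff m := by
    conv_rhs => rw [← h, Polynomial.coeff_map]
  have hre : ((B.coeff m).re : ℂ) = B.coeff m := Complex.conj_eq_iff_re.mp hfix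
  rw [Polynomial.coeff_map, Polynomial.finset_sum_coeff]
  simp only [Polynomial.coeff_C_mul, Polynomial.coeff_X_pow, mul_ite, mul_one, mul_zero]
  rw [Finset.sum_ite_eq B.support m (fun k => (B.coeff k).re)]
  by_cases hm : m ∈ B.support
  · rw [if_pos hm]
    simpa [Complex.coe_algebraMap] using hre
  · rw [if_neg hm]
    rw [Polynomial.notMem_support_iff.mp hm]
    simp

/-- Fejér–Riesz-type factorization: a reciprocal real Laurent polynomial that is
(real and) positive on the unit circle factors as b(w)·b(1/w) with b a real
Laurent polynomial. -/
theorem stmt15 (p : ℤ →₀ ℝ)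
    (hrec : ∀ k, p k = p (-k))
    (hpos : ∀ θ : ℝ, ∃ r : ℝ, 0 < r ∧ lEval p (Complex.exp (Complex.I * θ)) = r) :
    ∃ b : ℤ →₀ ℝ, ∀ z : ℂ, z ≠ 0 → lEval b z * lEval b z⁻¹ = lEval p z := by
  obtain ⟨r0, hr0, hp1⟩ := hpos 0
  have hp1' : lEval p 1 = (r0 : ℂ) := by simpa using hp1
  have hpne : p ≠ 0 := by
    rintro rfl
    rw [lEval] at hp1'
    simp at hp1'
    have : (r0 : ℂ) = 0 := hp1'.symm
    exact_mod_cast absurd this (by exact_mod_cast ne_of_gt hr0)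
  set n : ℕ := p.support.sup (fun k => k.natAbs) with hn
  have hbd : ∀ k : ℤ, n < k.natAbs → p k = 0 := by
    intro k hk
    by_contra hpk
    have h2 : k.natAbs ≤ n := by
      simpa [hn] using Finset.le_sup (f := fun k : ℤ => k.natAbs)
        (Finsupp.mem_support_iff.mpr hpk)
    omega
  have hpn : p n ≠ 0 := by
    obtain ⟨k0, hk0, hk0n⟩ := Finset.exists_mem_eq_sup p.support
      (Finsupp.support_nonempty_iff.mpr hpne) (fun k => k.natAbs)
    have hk0' : p k0 ≠ 0 := Finsupp.mem_support_iff.mp hk0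
    have hn0 : (n : ℤ) = k0.natAbs := by rw [hn, hk0n]
    rcases Int.natAbs_eq k0 with h | h
    · rw [hn0, ← h]; exact hk0'
    · rw [hrec, hn0, ← h]
      exact hk0'
  have hkn : ∀ k ∈ p.support, 0 ≤ k + n := by
    intro k hk
    have h2 : k.natAbs ≤ n := by
      simpa [hn] using Finset.le_sup (f := fun k : ℤ => k.natAbs) hk
    omega
  set P : Polynomial ℝ := ∑ k ∈ p.support, Polynomial.C (p k) * Polynomial.X ^ (k + n).toNat
    with hPdef
  have hcoeff : ∀ m : ℕ, P.coeff m = p ((m : ℤ) - n) := by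
    intro m
    rw [hPdef, Polynomial.finset_sum_coeff]
    simp only [Polynomial.coeff_C_mul, Polynomial.coeff_X_pow, mul_ite, mul_one, mul_zero]
    have : ∀ k ∈ p.support, (if m = (k + n).toNat then p k else 0)
        = if k = (m : ℤ) - n then p k else 0 := by
      intro k hk
      have h0 := hkn k hk
      congr 1
      exact propext (by omega)
    rw [Finset.sum_congr rfl this, Finset.sum_ite_eq' p.support ((m : ℤ) - n) (fun k => p k)]
    by_cases hm : ((m : ℤ) - n) ∈ p.support
    · rw [if_pos hm]
    · rw [if_neg hm, Finsupp.notMem_support_iff.mp hm]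
  have hPdeg : P.natDegree = 2 * n := by
    apply le_antisymm
    · apply Polynomial.natDegree_le_iff_coeff_eq_zero.mpr
      intro m hm
      rw [hcoeff]
      apply hbd
      omega
    · apply Polynomial.le_natDegree_of_ne_zero
      rw [hcoeff]
      have : ((2 * n : ℕ) : ℤ) - n = n := by push_cast; ring
      rw [this]; exact hpn
  set G : Polynomial ℂ := P.map (algebraMap ℝ ℂ) with hGdef
  have hGeval : ∀ z : ℂ, G.eval z = ∑ k ∈ p.support, (p k : ℂ) * z ^ ((k + (n : ℤ)).toNat) := by
    intro z
    rw [hGdef, hPdef, Polynomial.map_sum, Polynomial.eval_finset_sum]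
    apply Finset.sum_congr rfl
    intro k hk
    simp [Complex.coe_algebraMap]
  have hGl : ∀ z : ℂ, z ≠ 0 → lEval p z = z ^ (-(n : ℤ)) * G.eval z := by
    intro z hz
    rw [hGeval, Finset.mul_sum, lEval]
    apply Finset.sum_congr rfl
    intro k hk
    have h0 := hkn k hk
    rw [← zpow_natCast z ((k + (n:ℤ)).toNat), Int.toNat_of_nonneg h0]
    rw [← mul_assoc, mul_comm (z ^ (-(n:ℤ))) ((p k : ℂ)), mul_assoc, ← zpow_add₀ hz]
    congr 2
    ring
  -- G is nonzero, degree 2n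
  have hGdeg : G.natDegree = 2 * n := by
    rw [hGdef, Polynomial.natDegree_map_eq_of_injective (algebraMap ℝ ℂ).injective, hPdeg]
  have hPne : P ≠ 0 := by
    intro h
    apply hpn
    have h1 := hcoeff (2 * n)
    rw [h, Polynomial.coeff_zero] at h1
    have h2 : ((2 * n : ℕ) : ℤ) - n = n := by push_cast; ring
    rw [h2] at h1
    exact h1.symm
  have hGne : G ≠ 0 := by
    rw [hGdef]
    exact (Polynomial.map_ne_zero_iff (algebraMap ℝ ℂ).injective).mpr hPne
  have hG0 : G.eval 0 ≠ 0 := by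
    rw [hGdef, Polynomial.eval_zero_map]
    have h0 : P.eval 0 = p (-(n : ℤ)) := by
      rw [← Polynomial.coeff_zero_eq_eval_zero, hcoeff]
      norm_num
    rw [h0, ← hrec]
    exact fun h => hpn ((map_eq_zero _).mp h)
  -- circle nonvanishing
  have hcirc : ∀ z : ℂ, ‖z‖ = 1 → G.eval z ≠ 0 := by
    intro z hz hGz
    obtain ⟨θ, hθ⟩ := (Complex.norm_eq_one_iff z).mp hz
    obtain ⟨r, hr, hlr⟩ := hpos θ
    have hzne : z ≠ 0 := by
      intro h; rw [h] at hz; simp at hz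
    have : lEval p z = 0 := by rw [hGl z hzne, hGz, mul_zero]
    rw [mul_comm] at hθ
    rw [hθ] at hlr
    rw [this] at hlr
    exact (ne_of_gt hr) (by exact_mod_cast hlr.symm)
  -- reciprocity of lEval
  have hsymm : ∀ z : ℂ, lEval p z⁻¹ = lEval p z := by
    intro z
    rw [lEval, lEval]
    have hsupp_neg : ∀ k : ℤ, k ∈ p.support → -k ∈ p.support := by
      intro k hk
      simp only [Finsupp.mem_support_iff] at hk ⊢
      rw [← hrec]; exact hk
    apply Finset.sum_nbij' (i := fun k => -k) (j := fun k => -k)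
    · intro k hk; exact hsupp_neg k hk
    · intro k hk; exact hsupp_neg k hk
    · intro k _; ring
    · intro k _; ring
    · intro k _
      rw [← hrec k, zpow_neg, inv_zpow]
  -- key functional identity
  have hGinv : ∀ z : ℂ, z ≠ 0 → G.eval z = z ^ (2 * n) * G.eval z⁻¹ := by
    intro z hz
    have hz' : z⁻¹ ≠ 0 := inv_ne_zero hz
    have h1 := hGl z hz
    have h2 := hGl z⁻¹ hz'
    rw [hsymm z, h1] at h2
    have h3 : z ^ ((n : ℤ)) * (z ^ (-(n : ℤ)) * G.eval z)
        = z ^ ((n : ℤ)) * ((z⁻¹) ^ (-(n : ℤ)) * G.eval z⁻¹) := by rw [h2]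
    rw [← mul_assoc, ← zpow_add₀ hz, add_neg_cancel, zpow_zero, one_mul] at h3
    have h4 : (z⁻¹ : ℂ) ^ (-(n : ℤ)) = z ^ ((n : ℤ)) := by
      rw [inv_zpow, ← zpow_neg, neg_neg]
    rw [h4, ← mul_assoc, ← zpow_add₀ hz] at h3
    rw [h3, ← zpow_natCast z (2 * n)]
    congr 2
    push_cast
    ring
  -- roots machinery
  classical
  have hsplits : G.Splits := IsAlgClosed.splits G
  set c := G.leadingCoeff with hcdef
  have hcne : c ≠ 0 := Polynomial.leadingCoeff_ne_zero.mpr hGne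
  set R := G.roots with hRdef
  have hcard : R.card = 2 * n := by
    rw [hRdef, (Polynomial.splits_iff_card_roots).mp hsplits, hGdeg]
  have hGfac : G = Polynomial.C c * (R.map (fun r => Polynomial.X - Polynomial.C r)).prod :=
    hsplits.eq_prod_roots
  have hRne : ∀ r ∈ R, r ≠ 0 := by
    intro r hr h0
    have h1 := Polynomial.isRoot_of_mem_roots hr
    rw [h0] at h1
    exact hG0 h1
  have hRcirc : ∀ r ∈ R, ‖r‖ ≠ 1 := fun r hr h1 =>
    hcirc r h1 (Polynomial.isRoot_of_mem_roots hr)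
  have hGevalfac : ∀ z : ℂ, G.eval z = c * (R.map (fun r => z - r)).prod := by
    intro z
    conv_lhs => rw [hGfac]
    rw [Polynomial.eval_mul, Polynomial.eval_C, Polynomial.eval_multiset_prod, Multiset.map_map]
    congr 2
    apply Multiset.map_congr rfl
    intro r _
    simp
  set H : Polynomial ℂ :=
    Polynomial.C c * (R.map (fun r => 1 - Polynomial.C r * Polynomial.X)).prod with hHdef
  have hHeval : ∀ z : ℂ, H.eval z = c * (R.map (fun r => 1 - r * z)).prod := by
    intro z
    rw [hHdef, Polynomial.eval_mul, Polynomial.eval_C, Polynomial.eval_multiset_prod,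
      Multiset.map_map]
    congr 2
    apply Multiset.map_congr rfl
    intro r _
    simp
  have hHG : ∀ z : ℂ, z ≠ 0 → H.eval z = G.eval z := by
    intro z hz
    rw [hHeval, hGinv z hz, hGevalfac, ← hcard]
    have h1 : R.map (fun r => 1 - r * z) = R.map (fun r => z * (z⁻¹ - r)) := by
      apply Multiset.map_congr rfl
      intro r _
      field_simp
    rw [h1]
    have h2 : (R.map (fun r => z * (z⁻¹ - r))).prod
        = (R.map (fun _ => z)).prod * (R.map (fun r => z⁻¹ - r)).prod := by
      rw [← Multiset.prod_map_mul]
    rw [h2, Multiset.map_const', Multiset.prod_replicate]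
    ring
  have hHGpoly : H = G := by
    have hsub : ({(0 : ℂ)}ᶜ : Set ℂ) ⊆ {z : ℂ | (H - G).IsRoot z} := by
      intro z hz
      simp only [Set.mem_setOf_eq, Polynomial.IsRoot, Polynomial.eval_sub]
      rw [hHG z hz]
      ring
    have hinf : Set.Infinite {z : ℂ | (H - G).IsRoot z} :=
      Set.Infinite.mono hsub (Set.Finite.infinite_compl (Set.finite_singleton 0))
    have := Polynomial.eq_zero_of_infinite_isRoot _ hinf
    exact sub_eq_zero.mp this
  set δ := (R.map (fun r => -r)).prod with hδdef
  have hδne : δ ≠ 0 := by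
    rw [hδdef]
    apply Multiset.prod_ne_zero
    intro h0
    obtain ⟨r, hr, hr0⟩ := Multiset.mem_map.mp h0
    exact hRne r hr (by linear_combination -hr0)
  have hHfac : H = Polynomial.C (c * δ) *
      ((R.map (fun r => r⁻¹)).map (fun r => Polynomial.X - Polynomial.C r)).prod := by
    rw [hHdef]
    have h1 : R.map (fun r => 1 - Polynomial.C r * Polynomial.X)
        = R.map (fun r => Polynomial.C (-r) * (Polynomial.X - Polynomial.C r⁻¹)) := by
      apply Multiset.map_congr rfl
      intro r hr
      have h0 := hRne r hr
      rw [mul_sub, ← Polynomial.C_mul, neg_mul, mul_inv_cancel₀ h0]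
      simp only [map_neg, Polynomial.C_1]
      ring
    rw [h1]
    have h2 : (R.map (fun r => Polynomial.C (-r) * (Polynomial.X - Polynomial.C r⁻¹))).prod
        = (R.map (fun r => Polynomial.C (-r))).prod
          * (R.map (fun r => Polynomial.X - Polynomial.C r⁻¹)).prod := by
      rw [← Multiset.prod_map_mul]
    rw [h2]
    have h3 : (R.map (fun r => Polynomial.C (-r))).prod = Polynomial.C δ := by
      rw [hδdef, map_multiset_prod, Multiset.map_map]
      simp only [Function.comp]
    rw [h3, Multiset.map_map, Polynomial.C_mul]
    simp only [Function.comp]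
    ring
  have hRinv : R.map (fun r => r⁻¹) = R := by
    have h1 : H.roots = R.map (fun r => r⁻¹) := by
      rw [hHfac, Polynomial.roots_C_mul _ (mul_ne_zero hcne hδne),
        Polynomial.roots_multiset_prod_X_sub_C]
    rw [← h1, hHGpoly]
  -- conjugation
  have hGconj : G.map (starRingEnd ℂ) = G := by
    rw [hGdef, Polynomial.map_map]
    congr 1
    exact RingHom.ext fun x => Complex.conj_ofReal x
  have hRconj : R.map (starRingEnd ℂ) = R := by
    have h1 := hsplits.roots_map (starRingEnd ℂ)
    rw [hGconj] at h1
    exact h1.symm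
  -- split roots by modulus
  set S := R.filter (fun r => ‖r‖ < 1) with hSdef
  set T := R.filter (fun r => ¬ ‖r‖ < 1) with hTdef
  have hST : S + T = R := Multiset.filter_add_not _ R
  have hTinv : T.map (fun r => r⁻¹) = S := by
    have h1 : Multiset.filter (fun r => ‖r‖ < 1) (R.map (fun r => r⁻¹))
        = (R.filter ((fun r => ‖r‖ < 1) ∘ (fun r => r⁻¹))).map (fun r => r⁻¹) :=
      Multiset.filter_map (f := fun r : ℂ => r⁻¹) (s := R) (p := fun r => ‖r‖ < 1)
    rw [hRinv] at h1
    have h2 : R.filter ((fun r => ‖r‖ < 1) ∘ (fun r => r⁻¹)) = T := by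
      rw [hTdef]
      apply Multiset.filter_congr
      intro r hr
      have h0 := hRne r hr
      have hane := hRcirc r hr
      have ha : 0 < ‖r‖ := norm_pos_iff.mpr h0
      simp only [Function.comp, norm_inv]
      rw [inv_lt_one₀ ha]
      constructor
      · intro h hlt; linarith
      · intro h
        rcases lt_trichotomy (‖r‖) 1 with h1 | h1 | h1
        · exact absurd h1 h
        · exact absurd h1 hane
        · exact h1
    rw [h2] at h1
    rw [← h1, hSdef]
  have hSinv : S.map (fun r => r⁻¹) = T := by
    rw [← hTinv, Multiset.map_map]
    have : ((fun r : ℂ => r⁻¹) ∘ fun r : ℂ => r⁻¹) = id := funext fun r => inv_inv r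
    rw [this, Multiset.map_id]
  have hcS : S.card = n := by
    have h1 : S.card + T.card = 2 * n := by
      rw [← Multiset.card_add, hST, hcard]
    have h2 : S.card = T.card := by rw [← hTinv, Multiset.card_map]
    omega
  have hSsub : ∀ r ∈ S, r ∈ R := fun r hr => Multiset.mem_of_mem_filter hr
  -- conjugation invariance of S
  have hSconj : S.map (starRingEnd ℂ) = S := by
    have h1 : Multiset.filter (fun r => ‖r‖ < 1) (R.map (starRingEnd ℂ))
        = (R.filter ((fun r => ‖r‖ < 1) ∘ (starRingEnd ℂ))).map (starRingEnd ℂ) :=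
      Multiset.filter_map (f := (starRingEnd ℂ)) (s := R) (p := fun r => ‖r‖ < 1)
    rw [hRconj] at h1
    have h2 : R.filter ((fun r => ‖r‖ < 1) ∘ (starRingEnd ℂ)) = S := by
      rw [hSdef]
      apply Multiset.filter_congr
      intro r _
      simp [Function.comp, Complex.norm_conj]
    rw [h2] at h1
    rw [← h1, hSdef]
  -- the factor B
  set B : Polynomial ℂ := (S.map (fun r => Polynomial.X - Polynomial.C r)).prod with hBdef
  have hBconj : B.map (starRingEnd ℂ) = B := by
    rw [hBdef, Polynomial.map_multiset_prod, Multiset.map_map]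
    have h1 : (Polynomial.map (starRingEnd ℂ) ∘ fun r => Polynomial.X - Polynomial.C r)
        = (fun r => Polynomial.X - Polynomial.C r) ∘ (starRingEnd ℂ) := by
      funext r
      simp [Function.comp, Polynomial.map_sub]
    rw [h1, ← Multiset.map_map, hSconj]
  obtain ⟨Q, hQ⟩ := real_coeff_poly B hBconj
  have hBeval : ∀ z : ℂ, B.eval z = (S.map (fun r => z - r)).prod := by
    intro z
    rw [hBdef, Polynomial.eval_multiset_prod, Multiset.map_map]
    congr 1
    apply Multiset.map_congr rfl
    intro r _
    simp
  set δS := (S.map (fun r => -r)).prod with hδSdef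
  have hδSne : δS ≠ 0 := by
    rw [hδSdef]
    apply Multiset.prod_ne_zero
    intro h0
    obtain ⟨r, hr, hr0⟩ := Multiset.mem_map.mp h0
    exact hRne r (hSsub r hr) (by linear_combination -hr0)
  -- key factorization identity
  have hkey : ∀ z : ℂ, z ≠ 0 →
      lEval p z = (c * δS⁻¹) * (B.eval z * B.eval z⁻¹) := by
    intro z hz
    have hGz : G.eval z = c * (B.eval z * (S.map (fun s => z - s⁻¹)).prod) := by
      rw [hGevalfac, ← hST, Multiset.map_add, Multiset.prod_add, hBeval]
      have : T.map (fun r => z - r) = S.map (fun s => z - s⁻¹) := by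
        rw [← hSinv, Multiset.map_map]
        simp only [Function.comp]
      rw [this]
    have hBinv : B.eval z⁻¹ = δS * (z⁻¹) ^ n * (S.map (fun s => z - s⁻¹)).prod := by
      rw [hBeval]
      have h1 : S.map (fun s => z⁻¹ - s) = S.map (fun s => (-s) * z⁻¹ * (z - s⁻¹)) := by
        apply Multiset.map_congr rfl
        intro s hs
        have hs0 := hRne s (hSsub s hs)
        field_simp
        ring
      rw [h1]
      have h2 : (S.map (fun s => (-s) * z⁻¹ * (z - s⁻¹))).prod
          = (S.map (fun s => (-s) * z⁻¹)).prod * (S.map (fun s => z - s⁻¹)).prod := by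
        rw [← Multiset.prod_map_mul]
      have h3 : (S.map (fun s => (-s) * z⁻¹)).prod
          = (S.map (fun s => -s)).prod * (S.map (fun _ => z⁻¹)).prod := by
        rw [← Multiset.prod_map_mul]
      rw [h2, h3, Multiset.map_const', Multiset.prod_replicate, hcS, ← hδSdef]
    have hprod : (S.map (fun s => z - s⁻¹)).prod = δS⁻¹ * (z ^ n) * B.eval z⁻¹ := by
      rw [hBinv]
      have hzn : z ^ n * z⁻¹ ^ n = 1 := by rw [← mul_pow, mul_inv_cancel₀ hz, one_pow]
      calc _ = (δS⁻¹ * δS) * (z ^ n * z⁻¹ ^ n) * (S.map (fun s => z - s⁻¹)).prod := by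
            rw [inv_mul_cancel₀ hδSne, hzn, one_mul, one_mul]
        _ = _ := by ring
    rw [hGl z hz, hGz, hprod]
    have hzpow : z ^ (-(n : ℤ)) * z ^ n = 1 := by
      rw [← zpow_natCast z n, ← zpow_add₀ hz]
      norm_num
    calc z ^ (-(n : ℤ)) * (c * (B.eval z * (δS⁻¹ * z ^ n * B.eval z⁻¹)))
        = (z ^ (-(n : ℤ)) * z ^ n) * (c * δS⁻¹ * (B.eval z * B.eval z⁻¹)) := by ring
      _ = (c * δS⁻¹) * (B.eval z * B.eval z⁻¹) := by rw [hzpow, one_mul]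
  -- evaluate at 1 to identify the constant
  set t : ℝ := Q.eval 1 with htdef
  have hB1 : B.eval 1 = (t : ℂ) := by
    rw [← hQ, Polynomial.eval_one_map, htdef]
    rfl
  have hconst : (r0 : ℂ) = (c * δS⁻¹) * (t : ℂ) ^ 2 := by
    have := hkey 1 one_ne_zero
    rw [inv_one, hp1', hB1] at this
    rw [this]
    ring
  have htne : t ≠ 0 := by
    intro h0
    rw [h0] at hconst
    push_cast at hconst
    simp at hconst
    exact (ne_of_gt hr0) (by exact_mod_cast hconst)
  have hαval : c * δS⁻¹ = ((r0 / t ^ 2 : ℝ) : ℂ) := by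
    have ht2 : ((t : ℂ)) ^ 2 ≠ 0 := pow_ne_zero 2 (by exact_mod_cast htne)
    push_cast
    rw [eq_div_iff ht2]
    linear_combination -hconst
  set β : ℝ := Real.sqrt (r0 / t ^ 2) with hβdef
  have hβsq : β ^ 2 = r0 / t ^ 2 := by
    rw [hβdef, Real.sq_sqrt]
    positivity
  refine ⟨toL (Polynomial.C β * Q), ?_⟩
  intro z hz
  have heval : ∀ w : ℂ, lEval (toL (Polynomial.C β * Q)) w = (β : ℂ) * B.eval w := by
    intro w
    rw [lEval_toL, Polynomial.map_mul, Polynomial.map_C, Polynomial.eval_mul,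
      Polynomial.eval_C, hQ]
    rfl
  rw [heval z, heval z⁻¹, hkey z hz, hαval]
  have : ((β : ℂ)) ^ 2 = ((r0 / t ^ 2 : ℝ) : ℂ) := by
    rw [← hβsq]
    push_cast
    ring
  calc (β : ℂ) * B.eval z * ((β : ℂ) * B.eval z⁻¹)
      = (β : ℂ) ^ 2 * (B.eval z * B.eval z⁻¹) := by ring
    _ = ((r0 / t ^ 2 : ℝ) : ℂ) * (B.eval z * B.eval z⁻¹) := by rw [this]
end

section
/- Let a(w), d(w) be Laurent polynomials that take real values on the unit circle, such that the Laurent polynomial a(w)² + d(w)² is reciprocal, has real coefficients, and satisfies a(w)² + d(w)² < 1 on the unit circle. Then there exist Laurent polynomials b(w), c(w), real-valued on the unit circle, such that a(w)² + b(w)² + c(w)² + d(w)² = 1 for all w on the unit circle. -/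
open Finset

/-- Evaluation of a Laurent polynomial with complex coefficients at a nonzero
complex number. -/
noncomputable def lEvalC (p : ℤ →₀ ℂ) (z : ℂ) : ℂ :=
  ∑ k ∈ p.support, p k * z ^ k

open Polynomial Complex

lemma circle_infinite : Set.Infinite {z : ℂ | ‖z‖ = 1} := by
  have hinj : Set.InjOn (fun θ : ℝ => Complex.exp (θ * Complex.I)) (Set.Ioo 0 1) := by
    intro x hx y hy h
    have hb : Real.pi > 3 := Real.pi_gt_three
    have := Complex.exp_inj_of_neg_pi_lt_of_le_pi (x := (x:ℂ) * I) (y := (y:ℂ)*I)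
      (by simp; linarith [hx.1]) (by simp; nlinarith [hx.2])
      (by simp; linarith [hy.1]) (by simp; nlinarith [hy.2]) h
    field_simp at this
    exact_mod_cast this
  have h1 : (Set.Ioo (0:ℝ) 1).Infinite := Set.Ioo_infinite (by norm_num)
  refine Set.Infinite.mono ?_ (h1.image hinj)
  rintro z ⟨θ, _, rfl⟩
  simpa using Complex.norm_exp_ofReal_mul_I θ

lemma evalconj (Q : ℂ[X]) (u : ℂ) :
    (Q.map (starRingEnd ℂ)).eval u = (starRingEnd ℂ) (Q.eval ((starRingEnd ℂ) u)) := by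
  rw [Polynomial.eval_map]
  rw [Polynomial.eval, Polynomial.hom_eval₂]
  simp

lemma eval_reflect' {Q : ℂ[X]} {N : ℕ} (h : Q.natDegree ≤ N) {z : ℂ} (hz : z ≠ 0) :
    (Polynomial.reflect N Q).eval z = z ^ N * Q.eval z⁻¹ := by
  have hz' : z⁻¹ ≠ 0 := inv_ne_zero hz
  have : Invertible z⁻¹ := invertibleOfNonzero hz'
  have H := Polynomial.eval₂_reflect_mul_pow (RingHom.id ℂ) z⁻¹ N Q h
  rw [invOf_eq_inv, inv_inv] at H
  have H' : eval z (reflect N Q) * (z⁻¹)^N = eval z⁻¹ Q := H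
  have hzN : (z:ℂ)^N ≠ 0 := pow_ne_zero _ hz
  field_simp at H'
  rw [one_div] at H'; rw [← H', mul_left_comm, ← mul_pow, mul_inv_cancel₀ hz, one_pow, mul_one]


lemma exists_bad_point (m : ℕ) (hm : 1 ≤ m) :
    ∃ z : ℂ, ‖z‖ = 1 ∧ z ^ m = I := by
  refine ⟨Complex.exp ((Real.pi/(2*m) : ℝ) * I), Complex.norm_exp_ofReal_mul_I _, ?_⟩
  rw [← Complex.exp_nat_mul]
  have hm' : (m:ℂ) ≠ 0 := by
    exact_mod_cast Nat.cast_ne_zero.mpr (by omega)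
  have : (m : ℂ) * ((Real.pi/(2*m) : ℝ) * I) = (Real.pi/2 : ℝ) * I := by
    push_cast
    field_simp
  rw [this, Complex.exp_mul_I, ← Complex.ofReal_cos, ← Complex.ofReal_sin,
    Real.cos_pi_div_two, Real.sin_pi_div_two]
  simp

lemma ofReal_mul_re' (t : ℝ) (w : ℂ) : ((t:ℂ)*w).re = t * w.re := by
  simp [Complex.mul_re]
lemma ofReal_mul_im' (t : ℝ) (w : ℂ) : ((t:ℂ)*w).im = t * w.im := by
  simp [Complex.mul_im]

lemma fejer_riesz : ∀ (n m : ℕ) (Q : ℂ[X]), Q.natDegree = n → Q.natDegree ≤ 2*m →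
    (∀ z : ℂ, ‖z‖ = 1 → ((z ^ m)⁻¹ * Q.eval z).im = 0) →
    (∀ z : ℂ, ‖z‖ = 1 → 0 < ((z ^ m)⁻¹ * Q.eval z).re) →
    ∃ p : ℂ[X], ∀ z : ℂ, ‖z‖ = 1 →
      (z ^ m)⁻¹ * Q.eval z = p.eval z * (starRingEnd ℂ) (p.eval z) := by
  intro n
  induction n using Nat.strong_induction_on with
  | _ n IH =>
  intro m Q hdeg hdeg2 him hre
  have hz0 : ∀ z : ℂ, ‖z‖ = 1 → z ≠ 0 := by
    intro z hz h; rw [h] at hz; simp at hz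
  have hQne : ∀ z : ℂ, ‖z‖ = 1 → Q.eval z ≠ 0 := by
    intro z hz h
    have := hre z hz
    rw [h, mul_zero] at this; simp at this
  have hconj : ∀ z : ℂ, ‖z‖ = 1 → (starRingEnd ℂ) z = z⁻¹ := by
    intro z hz
    have h1 : z * (starRingEnd ℂ) z = 1 := by
      rw [Complex.mul_conj]
      rw [Complex.normSq_eq_norm_sq, hz]; norm_num
    exact (inv_eq_of_mul_eq_one_right h1).symm
  set G := Polynomial.reflect (2*m) (Q.map (starRingEnd ℂ)) with hGdef
  have hmapdeg : (Q.map (starRingEnd ℂ)).natDegree ≤ 2*m :=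
    le_trans Polynomial.natDegree_map_le hdeg2
  have hGval : ∀ z : ℂ, z ≠ 0 →
      G.eval z = z^(2*m) * (starRingEnd ℂ) (Q.eval (((starRingEnd ℂ) z)⁻¹)) := by
    intro z hz
    rw [hGdef, eval_reflect' hmapdeg hz, evalconj, map_inv₀]
  have hGQ : G = Q := by
    apply Polynomial.eq_of_infinite_eval_eq
    apply Set.Infinite.mono _ circle_infinite
    intro z hz
    simp only [Set.mem_setOf_eq] at hz ⊢
    have hz0' := hz0 z hz
    have hpm : (z:ℂ)^m ≠ 0 := pow_ne_zero _ hz0'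
    have h1 := hGval z hz0'
    have h2 : ((starRingEnd ℂ) z)⁻¹ = z := by rw [hconj z hz, inv_inv]
    rw [h2] at h1
    have h3 : (starRingEnd ℂ) ((z^m)⁻¹ * Q.eval z) = (z^m)⁻¹ * Q.eval z :=
      Complex.conj_eq_iff_im.mpr (him z hz)
    rw [map_mul, map_inv₀, map_pow, hconj z hz, inv_pow, inv_inv] at h3
    calc Polynomial.eval z G = z^(2*m) * (starRingEnd ℂ) (Q.eval z) := h1
      _ = z^m * (z^m * (starRingEnd ℂ) (Q.eval z)) := by rw [two_mul, pow_add]; ring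
      _ = z^m * ((z^m)⁻¹ * Q.eval z) := by rw [h3]
      _ = Q.eval z := by field_simp
  have Hstar : ∀ z : ℂ, z ≠ 0 →
      Q.eval z = z^(2*m) * (starRingEnd ℂ) (Q.eval (((starRingEnd ℂ) z)⁻¹)) := by
    intro z hz
    have h := hGval z hz
    rw [hGQ] at h
    exact h
  rcases Nat.eq_zero_or_pos n with hn0 | hnpos
  · -- constant case
    subst hn0
    obtain ⟨c, hc⟩ := Polynomial.natDegree_eq_zero.mp hdeg
    subst hc
    rcases Nat.eq_zero_or_pos m with hm0 | hm1
    · subst hm0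
      have hcim : c.im = 0 := by simpa using him 1 (by simp)
      have hcre : 0 < c.re := by simpa using hre 1 (by simp)
      refine ⟨C ((Real.sqrt c.re : ℝ) : ℂ), fun z hz => ?_⟩
      simp only [pow_zero, inv_one, one_mul, Polynomial.eval_C, Complex.conj_ofReal]
      rw [← Complex.ofReal_mul, Real.mul_self_sqrt hcre.le]
      exact (Complex.ext rfl hcim : c = (c.re : ℂ))
    · exfalso
      obtain ⟨z, hzabs, hzm⟩ := exists_bad_point m hm1
      have h1 := him z hzabs
      rw [Polynomial.eval_C, hzm, Complex.inv_I] at h1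
      have hcre : 0 < c.re := by simpa using hre 1 (by simp)
      simp [Complex.mul_im] at h1
      linarith
  · -- nonconstant case
    have hm1 : 1 ≤ m := by omega
    have hQne0 : Q ≠ 0 := by
      intro h; exact hQne 1 (by simp) (by simp [h])
    obtain ⟨ρ, hρ⟩ : ∃ ρ, Q.IsRoot ρ := by
      apply Complex.exists_root
      rw [Polynomial.degree_eq_natDegree hQne0, hdeg]
      exact_mod_cast (by omega : 0 < n)
    by_cases hρ0 : Q.eval 0 = 0
    · -- zero root case
      have hc0 : Q.coeff 0 = 0 := by rwa [Polynomial.coeff_zero_eq_eval_zero]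
      have hc2m : Q.coeff (2*m) = 0 := by
        have h := congrArg (fun P => Polynomial.coeff P (2*m)) hGQ
        simp only [hGdef, Polynomial.coeff_reflect] at h
        rw [Polynomial.revAt_le (le_refl (2*m)), Nat.sub_self,
          Polynomial.coeff_map, hc0, map_zero] at h
        exact h.symm
      have hdeglt : Q.natDegree < 2*m := by
        rcases lt_or_eq_of_le hdeg2 with h | h
        · exact h
        · exfalso
          have hlc := Polynomial.leadingCoeff_ne_zero.mpr hQne0
          rw [Polynomial.leadingCoeff, h] at hlc
          exact hlc hc2m
      obtain ⟨Q₂, hQ₂⟩ := (Polynomial.X_dvd_iff).mpr hc0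
      have hQ₂ne : Q₂ ≠ 0 := by
        rintro rfl; rw [mul_zero] at hQ₂; exact hQne0 hQ₂
      have hdQ₂ : Q₂.natDegree = n - 1 := by
        have h := Polynomial.natDegree_mul (Polynomial.X_ne_zero) hQ₂ne
        rw [← hQ₂, Polynomial.natDegree_X, hdeg] at h
        omega
      have key : ∀ z : ℂ, ‖z‖ = 1 →
          (z^(m-1))⁻¹ * Q₂.eval z = (z^m)⁻¹ * Q.eval z := by
        intro z hz
        have hz0' := hz0 z hz
        rw [hQ₂, Polynomial.eval_mul, Polynomial.eval_X]
        rw [show z^m = z^(m-1)*z by rw [← pow_succ]; congr 1; omega]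
        field_simp
      obtain ⟨p, hp⟩ := IH (n-1) (by omega) (m-1) Q₂ hdQ₂ (by omega)
        (fun z hz => by rw [key z hz]; exact him z hz)
        (fun z hz => by rw [key z hz]; exact hre z hz)
      exact ⟨p, fun z hz => by rw [← key z hz]; exact hp z hz⟩
    · -- pair of roots off the circle
      have hρne0 : ρ ≠ 0 := by rintro rfl; exact hρ0 hρ
      have hρabs : ‖ρ‖ ≠ 1 := fun h => hQne ρ h hρ
      have hcρ : (starRingEnd ℂ) ρ ≠ 0 := by simpa using hρne0
      set σ := ((starRingEnd ℂ) ρ)⁻¹ with hσdef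
      have hσne0 : σ ≠ 0 := inv_ne_zero hcρ
      have hσroot : Q.IsRoot σ := by
        have h2 : ((starRingEnd ℂ) σ)⁻¹ = ρ := by
          rw [hσdef, map_inv₀, Complex.conj_conj, inv_inv]
        have h := Hstar σ hσne0
        rw [h2] at h
        have : Q.eval ρ = 0 := hρ
        rw [Polynomial.IsRoot, h, this, map_zero, mul_zero]
      have hσρ : σ ≠ ρ := by
        intro h
        apply hρabs
        have h1 : ρ * (starRingEnd ℂ) ρ = 1 := by
          have : (starRingEnd ℂ) ρ = ρ⁻¹ := by
            rw [← inv_inv ((starRingEnd ℂ) ρ), ← hσdef, h]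
          rw [this]
          field_simp
        rw [Complex.mul_conj] at h1
        have h2 : Complex.normSq ρ = 1 := by exact_mod_cast h1
        have := Complex.sq_norm ρ
        rw [h2] at this
        nlinarith [norm_nonneg ρ]
      obtain ⟨Q₁, hQ₁⟩ := Polynomial.dvd_iff_isRoot.mpr hρ
      have hQ₁σ : Q₁.IsRoot σ := by
        have h : Q.eval σ = (σ - ρ) * Q₁.eval σ := by rw [hQ₁]; simp
        have h2 : (σ - ρ) * Q₁.eval σ = 0 := by rw [← h]; exact hσroot
        rcases mul_eq_zero.mp h2 with h3 | h3
        · exact absurd (sub_eq_zero.mp h3) hσρ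
        · exact h3
      obtain ⟨Q₃, hQ₃⟩ := Polynomial.dvd_iff_isRoot.mpr hQ₁σ
      have hQfact : Q = (X - C ρ) * (X - C σ) * Q₃ := by rw [hQ₁, hQ₃]; ring
      have hQ₃ne : Q₃ ≠ 0 := by
        rintro rfl; rw [mul_zero] at hQfact; exact hQne0 hQfact
      have hdQ₃ : Q₃.natDegree = n - 2 ∧ 2 ≤ n := by
        have h2 := Polynomial.natDegree_mul
          (mul_ne_zero (Polynomial.X_sub_C_ne_zero ρ) (Polynomial.X_sub_C_ne_zero σ)) hQ₃ne
        rw [← hQfact, Polynomial.natDegree_mul (Polynomial.X_sub_C_ne_zero ρ)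
          (Polynomial.X_sub_C_ne_zero σ), Polynomial.natDegree_X_sub_C,
          Polynomial.natDegree_X_sub_C, hdeg] at h2
        constructor <;> omega
      set Q' := C (-σ) * Q₃ with hQ'def
      have hQ'deg : Q'.natDegree = n - 2 := by
        rw [hQ'def, Polynomial.natDegree_C_mul (neg_ne_zero.mpr hσne0)]
        exact hdQ₃.1
      have key : ∀ z : ℂ, ‖z‖ = 1 →
          (z^m)⁻¹ * Q.eval z
            = (Complex.normSq (z - ρ) : ℂ) * ((z^(m-1))⁻¹ * Q'.eval z) := by
        intro z hz
        have hz0' := hz0 z hz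
        have hcz : (starRingEnd ℂ) z = z⁻¹ := hconj z hz
        have hnsq : (Complex.normSq (z - ρ) : ℂ)
            = (z - ρ) * ((starRingEnd ℂ) (z - ρ)) := (Complex.mul_conj _).symm
        have hcsub : (starRingEnd ℂ) (z - ρ) = z⁻¹ - (starRingEnd ℂ) ρ := by
          rw [map_sub, hcz]
        have hfac : z - σ = -σ * z * (z⁻¹ - (starRingEnd ℂ) ρ) := by
          rw [hσdef]
          field_simp
          ring
        rw [hQfact]
        simp only [Polynomial.eval_mul, Polynomial.eval_sub, Polynomial.eval_X,
          Polynomial.eval_C, hQ'def]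
        rw [hnsq, hcsub, hfac]
        rw [show z^m = z^(m-1)*z by rw [← pow_succ]; congr 1; omega]
        field_simp
      have htpos : ∀ z : ℂ, ‖z‖ = 1 → 0 < Complex.normSq (z - ρ) := by
        intro z hz
        apply Complex.normSq_pos.mpr
        intro h
        rw [sub_eq_zero] at h
        exact hρabs (h ▸ hz)
      obtain ⟨p', hp'⟩ := IH (n-2) (by omega) (m-1) Q' hQ'deg (by omega)
        (fun z hz => by
          have h1 := him z hz
          rw [key z hz, ofReal_mul_im'] at h1
          exact (mul_eq_zero.mp h1).resolve_left (ne_of_gt (htpos z hz)))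
        (fun z hz => by
          have h1 := hre z hz
          rw [key z hz, ofReal_mul_re'] at h1
          rcases mul_pos_iff.mp h1 with ⟨_, h⟩ | ⟨h2, _⟩
          · exact h
          · linarith [htpos z hz])
      refine ⟨(X - C ρ) * p', fun z hz => ?_⟩
      rw [key z hz, hp' z hz]
      simp only [Polynomial.eval_mul, Polynomial.eval_sub, Polynomial.eval_X,
        Polynomial.eval_C, map_mul, map_sub]
      rw [show ((starRingEnd ℂ) z - (starRingEnd ℂ) ρ) = (starRingEnd ℂ) (z - ρ) by rw [map_sub]]
      rw [show (Complex.normSq (z - ρ) : ℂ) = (z - ρ) * ((starRingEnd ℂ) (z - ρ)) from (Complex.mul_conj _).symm]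
      ring

lemma conj_eq_inv' {z : ℂ} (hz : ‖z‖ = 1) : (starRingEnd ℂ) z = z⁻¹ := by
  have h1 : z * (starRingEnd ℂ) z = 1 := by
    rw [Complex.mul_conj, Complex.normSq_eq_norm_sq, hz]; norm_num
  exact (inv_eq_of_mul_eq_one_right h1).symm

lemma abs_ne_zero_of_one {z : ℂ} (hz : ‖z‖ = 1) : z ≠ 0 := by
  intro h; rw [h] at hz; simp at hz

lemma lEvalC_eq_sum (q : ℤ →₀ ℂ) (s : Finset ℤ) (hs : q.support ⊆ s) (z : ℂ) :
    lEvalC q z = ∑ k ∈ s, q k * z ^ k := by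
  exact Finset.sum_subset hs (fun k _ hk => by
    rw [Finsupp.notMem_support_iff.mp hk, zero_mul])

lemma lEvalC_add (q r : ℤ →₀ ℂ) (z : ℂ) :
    lEvalC (q + r) z = lEvalC q z + lEvalC r z := by
  rw [lEvalC_eq_sum (q+r) (q.support ∪ r.support) Finsupp.support_add z,
    lEvalC_eq_sum q (q.support ∪ r.support) Finset.subset_union_left z,
    lEvalC_eq_sum r (q.support ∪ r.support) Finset.subset_union_right z,
    ← Finset.sum_add_distrib]
  apply Finset.sum_congr rfl
  intro k _
  rw [Finsupp.add_apply]; ring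

lemma lEvalC_smul (r : ℂ) (q : ℤ →₀ ℂ) (z : ℂ) :
    lEvalC (r • q) z = r * lEvalC q z := by
  rw [lEvalC_eq_sum (r • q) q.support (Finsupp.support_smul) z, lEvalC, Finset.mul_sum]
  apply Finset.sum_congr rfl
  intro k _
  rw [Finsupp.smul_apply, smul_eq_mul]; ring

lemma lEvalC_sub (q r : ℤ →₀ ℂ) (z : ℂ) :
    lEvalC (q - r) z = lEvalC q z - lEvalC r z := by
  rw [sub_eq_add_neg, ← neg_one_smul ℂ r, lEvalC_add, lEvalC_smul]; ring

noncomputable def polyToL (p : ℂ[X]) : ℤ →₀ ℂ :=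
  Finsupp.onFinset ((Finset.range (p.natDegree+1)).image (fun j : ℕ => (j:ℤ)))
    (fun k => if 0 ≤ k then p.coeff k.toNat else 0)
    (by intro k hk
        simp only [Finset.mem_image, Finset.mem_range]
        by_cases h : 0 ≤ k
        · refine ⟨k.toNat, ?_, Int.toNat_of_nonneg h⟩
          rw [if_pos h] at hk
          by_contra hlt
          push_neg at hlt
          exact hk (Polynomial.coeff_eq_zero_of_natDegree_lt (by omega))
        · rw [if_neg h] at hk; exact absurd rfl hk)

noncomputable def polyToLc (p : ℂ[X]) : ℤ →₀ ℂ :=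
  Finsupp.onFinset ((Finset.range (p.natDegree+1)).image (fun j : ℕ => -(j:ℤ)))
    (fun k => if k ≤ 0 then (starRingEnd ℂ) (p.coeff (-k).toNat) else 0)
    (by intro k hk
        simp only [Finset.mem_image, Finset.mem_range]
        by_cases h : k ≤ 0
        · refine ⟨(-k).toNat, ?_, by omega⟩
          rw [if_pos h] at hk
          by_contra hlt
          push_neg at hlt
          refine hk ?_
          rw [Polynomial.coeff_eq_zero_of_natDegree_lt (by omega), map_zero]
        · rw [if_neg h] at hk; exact absurd rfl hk)

lemma lEvalC_polyToL (p : ℂ[X]) (z : ℂ) : lEvalC (polyToL p) z = p.eval z := by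
  rw [lEvalC_eq_sum (polyToL p) _ Finsupp.support_onFinset_subset z]
  rw [Finset.sum_image (by intro x _ y _ h; simp only at h; exact_mod_cast h)]
  rw [Polynomial.eval_eq_sum_range]
  apply Finset.sum_congr rfl
  intro j _
  have h1 : (polyToL p) ((j:ℤ)) = p.coeff j := by
    simp [polyToL, Finsupp.onFinset_apply]
  rw [h1, zpow_natCast]

lemma lEvalC_polyToLc (p : ℂ[X]) (z : ℂ) (hz : ‖z‖ = 1) :
    lEvalC (polyToLc p) z = (starRingEnd ℂ) (p.eval z) := by
  rw [lEvalC_eq_sum (polyToLc p) _ Finsupp.support_onFinset_subset z]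
  rw [Finset.sum_image (by intro x _ y _ h; simp only at h; omega)]
  rw [Polynomial.eval_eq_sum_range, map_sum]
  apply Finset.sum_congr rfl
  intro j _
  have h1 : (polyToLc p) (-(j:ℤ)) = (starRingEnd ℂ) (p.coeff j) := by
    simp [polyToLc, Finsupp.onFinset_apply]
  have h2 : ‖z ^ j‖ = 1 := by rw [norm_pow, hz, one_pow]
  rw [h1, map_mul, zpow_neg, zpow_natCast, conj_eq_inv' h2]


/-- Haah's completion theorem: if `a, d` are Laurent polynomials real-valued on
the unit circle, `a² + d²` is reciprocal and `< 1` on the unit circle, then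
there are Laurent polynomials `b, c`, real-valued on the unit circle, with
`a² + b² + c² + d² = 1` on the unit circle. -/
theorem stmt16 (a d : ℤ →₀ ℂ)
    (ha : ∀ z : ℂ, ‖z‖ = 1 → (lEvalC a z).im = 0)
    (hd : ∀ z : ℂ, ‖z‖ = 1 → (lEvalC d z).im = 0)
    (hrec : ∀ z : ℂ, z ≠ 0 →
      lEvalC a z ^ 2 + lEvalC d z ^ 2 = lEvalC a z⁻¹ ^ 2 + lEvalC d z⁻¹ ^ 2)
    (hlt : ∀ z : ℂ, ‖z‖ = 1 →
      (lEvalC a z).re ^ 2 + (lEvalC d z).re ^ 2 < 1) :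
    ∃ b c : ℤ →₀ ℂ,
      (∀ z : ℂ, ‖z‖ = 1 → (lEvalC b z).im = 0) ∧
      (∀ z : ℂ, ‖z‖ = 1 → (lEvalC c z).im = 0) ∧
      ∀ z : ℂ, ‖z‖ = 1 →
        lEvalC a z ^ 2 + lEvalC b z ^ 2 + lEvalC c z ^ 2 + lEvalC d z ^ 2 = 1 := by
  classical
  set n : ℕ := (a.support ∪ d.support).sup (fun k => k.natAbs) with hn
  have hbda : ∀ k ∈ a.support, k.natAbs ≤ n :=
    fun k hk => Finset.le_sup (Finset.mem_union_left _ hk)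
  have hbdd : ∀ k ∈ d.support, k.natAbs ≤ n :=
    fun k hk => Finset.le_sup (Finset.mem_union_right _ hk)
  set A : ℂ[X] := ∑ k ∈ a.support, C (a k) * X ^ (k + n).toNat with hA
  set D : ℂ[X] := ∑ k ∈ d.support, C (d k) * X ^ (k + n).toNat with hD
  have hAeval : ∀ z : ℂ, z ≠ 0 → A.eval z = z^n * lEvalC a z := by
    intro z hz
    rw [hA, Polynomial.eval_finset_sum, lEvalC, Finset.mul_sum]
    apply Finset.sum_congr rfl
    intro k hk
    have h1 : k.natAbs ≤ n := hbda k hk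
    have h2 : ((k + n).toNat : ℤ) = k + n := by omega
    rw [Polynomial.eval_mul, Polynomial.eval_C, Polynomial.eval_pow, Polynomial.eval_X]
    rw [← zpow_natCast z ((k + n).toNat), h2, zpow_add₀ hz, zpow_natCast]
    ring
  have hDeval : ∀ z : ℂ, z ≠ 0 → D.eval z = z^n * lEvalC d z := by
    intro z hz
    rw [hD, Polynomial.eval_finset_sum, lEvalC, Finset.mul_sum]
    apply Finset.sum_congr rfl
    intro k hk
    have h1 : k.natAbs ≤ n := hbdd k hk
    have h2 : ((k + n).toNat : ℤ) = k + n := by omega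
    rw [Polynomial.eval_mul, Polynomial.eval_C, Polynomial.eval_pow, Polynomial.eval_X]
    rw [← zpow_natCast z ((k + n).toNat), h2, zpow_add₀ hz, zpow_natCast]
    ring
  have hAdeg : A.natDegree ≤ 2*n := by
    apply Polynomial.natDegree_sum_le_of_forall_le
    intro k hk
    refine le_trans (Polynomial.natDegree_C_mul_le _ _) ?_
    rw [Polynomial.natDegree_X_pow]
    have := hbda k hk
    omega
  have hDdeg : D.natDegree ≤ 2*n := by
    apply Polynomial.natDegree_sum_le_of_forall_le
    intro k hk
    refine le_trans (Polynomial.natDegree_C_mul_le _ _) ?_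
    rw [Polynomial.natDegree_X_pow]
    have := hbdd k hk
    omega
  set F : ℂ[X] := X^(2*n) - A*A - D*D with hF
  have hFdeg : F.natDegree ≤ 2*(2*n) := by
    refine le_trans (Polynomial.natDegree_sub_le _ _) (max_le ?_ ?_)
    · refine le_trans (Polynomial.natDegree_sub_le _ _) (max_le ?_ ?_)
      · rw [Polynomial.natDegree_X_pow]; omega
      · exact le_trans Polynomial.natDegree_mul_le (by omega)
    · exact le_trans Polynomial.natDegree_mul_le (by omega)
  have hFeval : ∀ z : ℂ, ‖z‖ = 1 →
      (z^(2*n))⁻¹ * F.eval z = 1 - lEvalC a z^2 - lEvalC d z^2 := by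
    intro z hz
    have hz0 := abs_ne_zero_of_one hz
    have hzn : (z:ℂ)^n ≠ 0 := pow_ne_zero _ hz0
    rw [hF]
    simp only [Polynomial.eval_sub, Polynomial.eval_mul, Polynomial.eval_pow,
      Polynomial.eval_X]
    rw [hAeval z hz0, hDeval z hz0]
    have h2 : z^(2*n) = z^n * z^n := by rw [two_mul, pow_add]
    rw [h2]
    field_simp
  have him : ∀ z : ℂ, ‖z‖ = 1 → ((z^(2*n))⁻¹ * F.eval z).im = 0 := by
    intro z hz
    rw [hFeval z hz]
    have r1 := ha z hz
    have r2 := hd z hz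
    simp [pow_two, Complex.sub_im, Complex.mul_im, r1, r2]
  have hrepos : ∀ z : ℂ, ‖z‖ = 1 → 0 < ((z^(2*n))⁻¹ * F.eval z).re := by
    intro z hz
    rw [hFeval z hz]
    have r1 := ha z hz
    have r2 := hd z hz
    have := hlt z hz
    simp only [Complex.sub_re, Complex.one_re, pow_two, Complex.mul_re, r1, r2,
      mul_zero, zero_mul, sub_zero]
    nlinarith
  obtain ⟨p, hp⟩ := fejer_riesz F.natDegree (2*n) F rfl hFdeg him hrepos
  set bb : ℤ →₀ ℂ := (2:ℂ)⁻¹ • (polyToL p + polyToLc p) with hbb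
  set cc : ℤ →₀ ℂ := (2*Complex.I)⁻¹ • (polyToL p - polyToLc p) with hcc
  have hb : ∀ z : ℂ, ‖z‖ = 1 → lEvalC bb z = (((p.eval z).re : ℝ) : ℂ) := by
    intro z hz
    rw [hbb, lEvalC_smul, lEvalC_add, lEvalC_polyToL, lEvalC_polyToLc p z hz,
      Complex.add_conj]
    have h4 : ((2 * (p.eval z).re : ℝ) : ℂ) = 2 * (((p.eval z).re : ℝ) : ℂ) := by
      push_cast; ring
    rw [h4, inv_mul_cancel_left₀ (by norm_num : (2:ℂ) ≠ 0)]
  have hc : ∀ z : ℂ, ‖z‖ = 1 → lEvalC cc z = (((p.eval z).im : ℝ) : ℂ) := by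
    intro z hz
    rw [hcc, lEvalC_smul, lEvalC_sub, lEvalC_polyToL, lEvalC_polyToLc p z hz,
      Complex.sub_conj]
    have h4 : ((2 * (p.eval z).im : ℝ) : ℂ) * Complex.I
        = (2 * Complex.I) * (((p.eval z).im : ℝ) : ℂ) := by push_cast; ring
    rw [h4, inv_mul_cancel_left₀
      (mul_ne_zero (by norm_num) Complex.I_ne_zero : (2*Complex.I:ℂ) ≠ 0)]
  refine ⟨bb, cc, ?_, ?_, ?_⟩
  · intro z hz; rw [hb z hz]; exact Complex.ofReal_im _
  · intro z hz; rw [hc z hz]; exact Complex.ofReal_im _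
  · intro z hz
    have h1 := hp z hz
    rw [hFeval z hz, Complex.mul_conj, Complex.normSq_apply] at h1
    push_cast at h1
    rw [hb z hz, hc z hz]
    linear_combination -h1
end
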